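/- For the weight function w(i,j) = (i+j)/i² on real numbers, let q_n = inf over all real sequences 1 ≤ a_1 ≤ a_2 ≤ ... ≤ a_n of the total weight w(a_n,...,a_1,1) = Σ_{i} w(a_i, a_{i+1}) (with a_0 = 1, jumps taken between consecutive terms of the decreasing pattern). Then q_1 = 2, q_n = 1 + 2√(q_{n-1}) for n ≥ 2, and lim_{n→∞} q_n = 3 + 2√2. -/

import Mathlib

/-- `patternInf n` is the infimum of total weights `∑_{i<n} (a_i + a_{i+1})/a_i²`
over nondecreasing real patterns `1 = a_0 ≤ a_1 ≤ ⋯ ≤ a_n`, for the weight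
function `w(i,j) = (i+j)/i²`. -/
noncomputable def patternInf (n : ℕ) : ℝ :=
  sInf {S : ℝ | ∃ a : ℕ → ℝ, a 0 = 1 ∧ (∀ i < n, a i ≤ a (i+1)) ∧
    S = ∑ i ∈ Finset.range n, (a i + a (i+1)) / (a i) ^ 2}

noncomputable def auxQ : ℕ → ℝ
  | 0 => 0
  | n+1 => if n = 0 then 2 else 1 + 2 * Real.sqrt (auxQ n)

lemma auxQ_one : auxQ 1 = 2 := by simp [auxQ]

lemma auxQ_succ (n : ℕ) (hn : 1 ≤ n) : auxQ (n+1) = 1 + 2 * Real.sqrt (auxQ n) := by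
  cases n with
  | zero => omega
  | succ m => simp [auxQ]

lemma auxQ_ge_one (n : ℕ) (hn : 1 ≤ n) : 1 ≤ auxQ n := by
  cases n with
  | zero => omega
  | succ m =>
    cases m with
    | zero => norm_num [auxQ_one]
    | succ k =>
      rw [auxQ_succ _ (by omega)]
      nlinarith [Real.sqrt_nonneg (auxQ (k+1))]

lemma one_le_seq {n : ℕ} {a : ℕ → ℝ} (h0 : a 0 = 1)
    (hm : ∀ i < n, a i ≤ a (i+1)) : ∀ i ≤ n, 1 ≤ a i := by
  intro i hi
  induction i with
  | zero => simp [h0]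
  | succ k ih =>
    have hk : 1 ≤ a k := ih (by omega)
    have := hm k (by omega)
    linarith

/-- membership: auxQ n is attained. -/
lemma auxQ_mem (n : ℕ) (hn : 1 ≤ n) :
    auxQ n ∈ {S : ℝ | ∃ a : ℕ → ℝ, a 0 = 1 ∧ (∀ i < n, a i ≤ a (i+1)) ∧
      S = ∑ i ∈ Finset.range n, (a i + a (i+1)) / (a i) ^ 2} := by
  induction n, hn using Nat.le_induction with
  | base =>
    refine ⟨fun _ => 1, rfl, fun i _ => le_refl _, ?_⟩
    norm_num [auxQ_one]
  | succ n hn ih =>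
    obtain ⟨a, h0, hm, hs⟩ := ih
    set t := Real.sqrt (auxQ n) with ht
    have hQ1 : 1 ≤ auxQ n := auxQ_ge_one n hn
    have ht1 : 1 ≤ t := by
      rw [ht, show (1:ℝ) = Real.sqrt 1 by simp]
      exact Real.sqrt_le_sqrt hQ1
    have htpos : 0 < t := by linarith
    have ht2 : t ^ 2 = auxQ n := Real.sq_sqrt (by linarith)
    have hapos : ∀ i ≤ n, 1 ≤ a i := one_le_seq h0 hm
    refine ⟨fun i => match i with | 0 => 1 | (k+1) => t * a k, rfl, ?_, ?_⟩
    · intro i hi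
      match i with
      | 0 => simpa [h0] using ht1
      | (k+1) =>
        have := hm k (by omega)
        simp only
        nlinarith
    · rw [Finset.sum_range_succ']
      have hterm : ∀ i ∈ Finset.range n,
          ((fun i => match i with | 0 => (1:ℝ) | (k+1) => t * a k) (i+1)
            + (fun i => match i with | 0 => (1:ℝ) | (k+1) => t * a k) (i+2)) /
            ((fun i => match i with | 0 => (1:ℝ) | (k+1) => t * a k) (i+1)) ^ 2
          = (1/t) * ((a i + a (i+1)) / (a i) ^ 2) := by
        intro i hi
        simp only [Finset.mem_range] at hi
        have hai : 1 ≤ a i := hapos i (by omega)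
        have : (0:ℝ) < a i := by linarith
        simp only
        field_simp
      rw [Finset.sum_congr rfl hterm, ← Finset.mul_sum, ← hs]
      simp only
      rw [auxQ_succ n hn, ← ht]
      have : auxQ n = t * t := by nlinarith
      rw [this, h0]
      field_simp
      ring

/-- lower bound -/
lemma auxQ_lb (n : ℕ) (hn : 1 ≤ n) :
    ∀ x ∈ {S : ℝ | ∃ a : ℕ → ℝ, a 0 = 1 ∧ (∀ i < n, a i ≤ a (i+1)) ∧
      S = ∑ i ∈ Finset.range n, (a i + a (i+1)) / (a i) ^ 2}, auxQ n ≤ x := by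
  induction n, hn using Nat.le_induction with
  | base =>
    rintro x ⟨a, h0, hm, rfl⟩
    have := hm 0 (by omega)
    rw [auxQ_one]
    simp [h0]
    nlinarith [this, h0]
  | succ n hn ih =>
    rintro x ⟨a, h0, hm, rfl⟩
    have hapos : ∀ i ≤ n + 1, 1 ≤ a i := one_le_seq h0 hm
    have ha1 : 1 ≤ a 1 := hapos 1 (by omega)
    have ha1pos : (0:ℝ) < a 1 := by linarith
    set b : ℕ → ℝ := fun i => a (i+1) / a 1 with hb
    have hbmem : (∑ i ∈ Finset.range n, (b i + b (i+1)) / (b i) ^ 2) ∈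
        {S : ℝ | ∃ a : ℕ → ℝ, a 0 = 1 ∧ (∀ i < n, a i ≤ a (i+1)) ∧
          S = ∑ i ∈ Finset.range n, (a i + a (i+1)) / (a i) ^ 2} := by
      refine ⟨b, by simp [hb, div_self (ne_of_gt ha1pos)], ?_, rfl⟩
      intro i hi
      have := hm (i+1) (by omega)
      exact div_le_div_of_nonneg_right this (le_of_lt ha1pos) |>.trans_eq rfl
    have hIH := ih _ hbmem
    have hterm : ∀ i ∈ Finset.range n,
        (b i + b (i+1)) / (b i) ^ 2 = a 1 * ((a (i+1) + a (i+2)) / (a (i+1)) ^ 2) := by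
      intro i hi
      simp only [Finset.mem_range] at hi
      have hai : 1 ≤ a (i+1) := hapos (i+1) (by omega)
      have haipos : (0:ℝ) < a (i+1) := by linarith
      simp only [hb]
      field_simp
    rw [Finset.sum_congr rfl hterm, ← Finset.mul_sum] at hIH
    -- hIH : auxQ n ≤ a 1 * T where T is the tail sum
    rw [Finset.sum_range_succ']
    set T := ∑ i ∈ Finset.range n, (a (i+1) + a (i+2)) / (a (i+1)) ^ 2 with hT
    have hfirst : (a 0 + a 1) / (a 0) ^ 2 = 1 + a 1 := by rw [h0]; ring
    rw [hfirst, auxQ_succ n hn]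
    have hQ0 : 0 ≤ auxQ n := by linarith [auxQ_ge_one n hn]
    have hs := Real.sq_sqrt hQ0
    have hsn := Real.sqrt_nonneg (auxQ n)
    have hTge : auxQ n / a 1 ≤ T := by
      rw [div_le_iff₀ ha1pos]
      linarith [hIH]
    have key : 1 + 2 * Real.sqrt (auxQ n) ≤ 1 + a 1 + auxQ n / a 1 := by
      have h1 : 2 * Real.sqrt (auxQ n) ≤ a 1 + auxQ n / a 1 := by
        rw [← sub_nonneg]
        have : a 1 + auxQ n / a 1 - 2 * Real.sqrt (auxQ n)
            = (a 1 - Real.sqrt (auxQ n)) ^ 2 / a 1 := by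
          field_simp
          nlinarith
        rw [this]
        positivity
      linarith
    linarith [hTge, key]

lemma patternInf_eq (n : ℕ) (hn : 1 ≤ n) : patternInf n = auxQ n := by
  unfold patternInf
  apply le_antisymm
  · exact csInf_le ⟨auxQ n, fun x hx => auxQ_lb n hn x hx⟩ (auxQ_mem n hn)
  · exact le_csInf ⟨_, auxQ_mem n hn⟩ (auxQ_lb n hn)

lemma sqrtL : Real.sqrt (3 + 2 * Real.sqrt 2) = 1 + Real.sqrt 2 := by
  have h2 : Real.sqrt 2 ^ 2 = 2 := Real.sq_sqrt (by norm_num)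
  rw [show (3 + 2 * Real.sqrt 2) = (1 + Real.sqrt 2)^2 by nlinarith]
  exact Real.sqrt_sq (by positivity)

lemma auxQ_bound (n : ℕ) : 0 ≤ (3 + 2 * Real.sqrt 2) - auxQ (n+1) ∧
    (3 + 2 * Real.sqrt 2) - auxQ (n+1) ≤ 4 * (2/3)^n := by
  have h2 : Real.sqrt 2 ^ 2 = 2 := Real.sq_sqrt (by norm_num)
  have h2n : 0 ≤ Real.sqrt 2 := Real.sqrt_nonneg 2
  have h2lt : Real.sqrt 2 ≤ 3/2 := by nlinarith
  induction n with
  | zero => rw [auxQ_one]; constructor <;> nlinarith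
  | succ k ih =>
    obtain ⟨ih1, ih2⟩ := ih
    have hq1 : 1 ≤ auxQ (k+1) := auxQ_ge_one _ (by omega)
    set s := Real.sqrt (auxQ (k+1)) with hsdef
    have hs2 : s ^ 2 = auxQ (k+1) := Real.sq_sqrt (by linarith)
    have hs1 : 1 ≤ s := by
      rw [hsdef, show (1:ℝ) = Real.sqrt 1 by simp]
      exact Real.sqrt_le_sqrt hq1
    rw [auxQ_succ (k+1) (by omega), ← hsdef]
    -- (1+√2)^2 = 3+2√2 ; key: d = (1+√2) - s satisfies d*(1+√2+s) = L - Q(k+1) ≥ 0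
    have hd : ((1 + Real.sqrt 2) - s) * ((1 + Real.sqrt 2) + s)
        = (3 + 2 * Real.sqrt 2) - auxQ (k+1) := by nlinarith
    have hsum : (3:ℝ) ≤ (1 + Real.sqrt 2) + s := by nlinarith
    have hdpos : 0 ≤ (1 + Real.sqrt 2) - s := by
      by_contra h
      push_neg at h
      nlinarith
    constructor
    · nlinarith
    · have h3d : 3 * ((1 + Real.sqrt 2) - s) ≤ (3 + 2 * Real.sqrt 2) - auxQ (k+1) := by
        nlinarith
      have hgeo : (0:ℝ) ≤ (2/3)^k := by positivity
      have : (3 + 2 * Real.sqrt 2) - (1 + 2 * s) = 2 * ((1 + Real.sqrt 2) - s) := by ring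
      rw [this, pow_succ]
      nlinarith

theorem stmt_10 :
    patternInf 1 = 2 ∧
    (∀ n, 2 ≤ n → patternInf n = 1 + 2 * Real.sqrt (patternInf (n-1))) ∧
    Filter.Tendsto patternInf Filter.atTop (nhds (3 + 2 * Real.sqrt 2)) := by
  refine ⟨by rw [patternInf_eq 1 le_rfl, auxQ_one], ?_, ?_⟩
  · intro n hn
    obtain ⟨m, rfl⟩ : ∃ m, n = m + 2 := ⟨n - 2, by omega⟩
    rw [patternInf_eq (m+2) (by omega), show m + 2 - 1 = m + 1 from rfl,
      patternInf_eq (m+1) (by omega), auxQ_succ (m+1) (by omega)]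
  · have hQ : Filter.Tendsto auxQ Filter.atTop (nhds (3 + 2 * Real.sqrt 2)) := by
      have h1 : Filter.Tendsto (fun n : ℕ => auxQ (n + 1)) Filter.atTop
          (nhds (3 + 2 * Real.sqrt 2)) := by
        have hlo : Filter.Tendsto (fun n : ℕ => (3 + 2 * Real.sqrt 2) - 4 * (2/3:ℝ)^n)
            Filter.atTop (nhds (3 + 2 * Real.sqrt 2)) := by
          have := tendsto_pow_atTop_nhds_zero_of_lt_one (by norm_num : (0:ℝ) ≤ 2/3)
            (by norm_num : (2/3:ℝ) < 1)
          have := (tendsto_const_nhds (x := (3 + 2 * Real.sqrt 2 : ℝ))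
            (f := Filter.atTop (α := ℕ))).sub (this.const_mul 4)
          simpa using this
        refine tendsto_of_tendsto_of_tendsto_of_le_of_le hlo tendsto_const_nhds ?_ ?_
        · intro n; have := (auxQ_bound n).2; simp only; linarith
        · intro n; have := (auxQ_bound n).1; simp only; linarith
      exact (Filter.tendsto_add_atTop_iff_nat 1).mp h1
    refine hQ.congr' ?_
    filter_upwards [Filter.eventually_ge_atTop 1] with n hn
    exact (patternInf_eq n hn).symm
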